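/- If the class H' = {h_p : p prime} shatters a set {c_1, ..., c_n} of integers ≥ 2, then each c_i is divisible by a product of 2^{n-1} distinct primes, and the product c_1 · c_2 · ... · c_n has at least 2^n − 1 distinct prime factors. -/

import Mathlib

/-- `hp p x` is the hypothesis `h_p` : it is `false` iff `p ∣ x` and `x > p`. -/
def hp (p x : ℕ) : Bool := !(p ∣ x ∧ p < x : Bool)

lemma card_filter_false (n : ℕ) (i : Fin n) :
    (Finset.univ.filter (fun f : Fin n → Bool => f i = false)).card = 2 ^ (n - 1) := by
  classical
  set A := Finset.univ.filter (fun f : Fin n → Bool => f i = false) with hA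
  set B := Finset.univ.filter (fun f : Fin n → Bool => f i = true) with hB
  have hcard : A.card = B.card := by
    apply Finset.card_bij (fun f _ => Function.update f i true)
    · intro f hf
      simp [hB, Function.update_self]
    · intro f hf g hg h
      simp only [hA, Finset.mem_filter] at hf hg
      funext j
      by_cases hj : j = i
      · subst hj; rw [hf.2, hg.2]
      · have := congrFun h j
        simpa [Function.update_of_ne hj] using this
    · intro g hg
      simp only [hB, Finset.mem_filter] at hg
      refine ⟨Function.update g i false, ?_, ?_⟩
      · simp [hA]
      · funext j
        by_cases hj : j = i
        · subst hj; simp [Function.update_self, hg.2]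
        · simp [Function.update_of_ne hj]
  have hsum : A.card + B.card = 2 ^ n := by
    have := Finset.card_filter_add_card_filter_not
      (s := (Finset.univ : Finset (Fin n → Bool)))
      (p := fun f => f i = false)
    have hBeq : (Finset.univ.filter (fun f : Fin n → Bool => ¬ f i = false)) = B := by
      apply Finset.filter_congr
      intro f _
      simp
    rw [hBeq] at this
    simpa [Fintype.card_fun] using this
  have hn : 1 ≤ n := i.pos
  have h2 : 2 ^ n = 2 * 2 ^ (n - 1) := by
    conv_lhs => rw [show n = (n - 1) + 1 by omega]
    ring
  omega

theorem stmt3 (n : ℕ) (c : Fin n → ℕ) (hc2 : ∀ i, 2 ≤ c i) (hinj : Function.Injective c)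
    (hshat : ∀ f : Fin n → Bool, ∃ p : ℕ, p.Prime ∧ ∀ i, hp p (c i) = f i) :
    (∀ i, ∃ P : Finset ℕ, P.card = 2 ^ (n - 1) ∧ (∀ q ∈ P, q.Prime) ∧ (∏ q ∈ P, q) ∣ c i) ∧
      2 ^ n - 1 ≤ (∏ i, c i).primeFactors.card := by
  classical
  choose p hpprime hpspec using hshat
  have hpinj : Function.Injective p := by
    intro f g hfg
    funext i
    rw [← hpspec f i, ← hpspec g i, hfg]
  have hdvd : ∀ f i, f i = false → p f ∣ c i := by
    intro f i hfi
    have h := hpspec f i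
    rw [hfi] at h
    simp [hp] at h
    exact h.1
  constructor
  · intro i
    refine ⟨(Finset.univ.filter (fun f : Fin n → Bool => f i = false)).image p, ?_, ?_, ?_⟩
    · rw [Finset.card_image_of_injective _ hpinj, card_filter_false]
    · intro q hq
      simp only [Finset.mem_image] at hq
      obtain ⟨f, _, rfl⟩ := hq
      exact hpprime f
    · apply Finset.prod_primes_dvd
      · intro q hq
        simp only [Finset.mem_image] at hq
        obtain ⟨f, _, rfl⟩ := hq
        exact (hpprime f).prime
      · intro q hq
        simp only [Finset.mem_image, Finset.mem_filter] at hq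
        obtain ⟨f, hf, rfl⟩ := hq
        exact hdvd f i hf.2
  · have h0 : (∏ i, c i) ≠ 0 := by
      apply Finset.prod_ne_zero_iff.mpr
      intro i _
      exact Nat.ne_zero_of_lt (hc2 i)
    have hsub : ((Finset.univ.filter (fun f : Fin n → Bool => f ≠ fun _ => true)).image p)
        ⊆ (∏ i, c i).primeFactors := by
      intro q hq
      simp only [Finset.mem_image, Finset.mem_filter] at hq
      obtain ⟨f, ⟨_, hf⟩, rfl⟩ := hq
      obtain ⟨i, hi⟩ : ∃ i, f i = false := by
        by_contra h
        push_neg at h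
        exact hf (funext fun i => by simpa using h i)
      rw [Nat.mem_primeFactors]
      exact ⟨hpprime f, (hdvd f i hi).trans (Finset.dvd_prod_of_mem c (Finset.mem_univ i)), h0⟩
    have hcard := Finset.card_le_card hsub
    rw [Finset.card_image_of_injective _ hpinj] at hcard
    have hfil : (Finset.univ.filter (fun f : Fin n → Bool => f ≠ fun _ => true)).card
        = 2 ^ n - 1 := by
      rw [Finset.filter_ne', Finset.card_erase_of_mem (Finset.mem_univ _)]
      simp [Fintype.card_fun]
    omega
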